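/- Let W be a real vector space with a linear representation of ℝ⁺, written F ↦ F_λ. Let k ∈ ℝ, l ∈ ℕ, and suppose G₀, G₁, …, G_l ∈ W satisfy (G₀)_λ = λ^k Σ_{j=0}^{l} (log λ)^j G_j for all λ ∈ ℝ⁺. Then for every i with 0 ≤ i ≤ l and every μ ∈ ℝ⁺ one has (G_i)_μ = μ^k Σ_{j=i}^{l} binom(j, i) (log μ)^{j−i} G_j, where binom(j, i) is the binomial coefficient. In particular each G_i has almost homogeneous degree k and order l − i, and hence G₀ has almost homogeneous degree k and order l in the recursive sense. -/

import Mathlib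

/-- `AlmostHom act k l F` : `F` has almost homogeneous degree `k` and order `l`
with respect to the linear representation `act` of `ℝ⁺`. -/
def AlmostHom {W : Type*} [AddCommGroup W] [Module ℝ W]
    (act : ℝ → W →ₗ[ℝ] W) (k : ℝ) : ℕ → W → Prop
  | 0, F => ∀ μ : ℝ, 0 < μ → act μ F = μ ^ k • F
  | l + 1, F => ∃ G : Fin (l + 1) → W,
      (∀ j : Fin (l + 1), AlmostHom act k (l - (j : ℕ)) (G j)) ∧
      ∀ μ : ℝ, 0 < μ → act μ F =
        μ ^ k • F + μ ^ k • ∑ j : Fin (l + 1), (Real.log μ ^ ((j : ℕ) + 1)) • G j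
  termination_by l _ => l
  decreasing_by omega

/-- If a "polynomial" with vector coefficients vanishes for all real arguments,
then all coefficients vanish. -/
lemma vanish_of_forall_eval_zero {W : Type*} [AddCommGroup W] [Module ℝ W]
    (n : ℕ) (v : ℕ → W)
    (h : ∀ t : ℝ, ∑ j ∈ Finset.range n, t ^ j • v j = 0) :
    ∀ j < n, v j = 0 := by
  intro j hj
  rw [← Module.forall_dual_apply_eq_zero_iff ℝ]
  intro φ
  have hev : ∀ t : ℝ,
      Polynomial.eval t (∑ m ∈ Finset.range n,
        Polynomial.C (φ (v m)) * Polynomial.X ^ m) = 0 := by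
    intro t
    have h0 := congrArg φ (h t)
    simp only [map_sum, map_smul, smul_eq_mul, map_zero] at h0
    rw [Polynomial.eval_finset_sum]
    simp only [Polynomial.eval_mul, Polynomial.eval_C, Polynomial.eval_pow, Polynomial.eval_X]
    rw [← h0]
    exact Finset.sum_congr rfl fun m _ => mul_comm _ _
  have hp0 : (∑ m ∈ Finset.range n, Polynomial.C (φ (v m)) * Polynomial.X ^ m)
      = (0 : Polynomial ℝ) := by
    apply Polynomial.funext
    intro t
    simp [hev t]
  have hc := congrArg (fun p : Polynomial ℝ => p.coeff j) hp0
  simp only [Polynomial.finset_sum_coeff, Polynomial.coeff_C_mul, Polynomial.coeff_X_pow,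
    Polynomial.coeff_zero, mul_ite, mul_one, mul_zero] at hc
  rw [Finset.sum_ite_eq (Finset.range n)] at hc
  simp only [Finset.mem_range, hj, if_true] at hc
  exact hc

lemma sum_Icc_shift {M : Type*} [AddCommMonoid M] (a b : ℕ) (f : ℕ → M) :
    ∑ j ∈ Finset.Icc a b, f j = ∑ j ∈ Finset.range (b + 1 - a), f (a + j) := by
  refine Finset.sum_nbij' (i := fun j => j - a) (j := fun j => a + j) ?_ ?_ ?_ ?_ ?_ <;>
      simp only [Finset.mem_Icc, Finset.mem_range] <;> intro x hx
  · omega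
  · omega
  · omega
  · omega
  · exact congrArg f (by omega)

/-- Almost-homogeneity is preserved by scalar multiplication. -/
lemma almostHom_smul {W : Type*} [AddCommGroup W] [Module ℝ W]
    (act : ℝ → W →ₗ[ℝ] W) (k : ℝ) :
    ∀ l (F : W), AlmostHom act k l F → ∀ c : ℝ, AlmostHom act k l (c • F) := by
  intro l
  induction l using Nat.strong_induction_on with
  | _ l ih =>
    cases l with
    | zero =>
      intro F hF c
      simp only [AlmostHom] at hF ⊢
      intro μ hμ
      rw [map_smul, hF μ hμ, smul_comm]
    | succ m =>
      intro F hF c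
      simp only [AlmostHom] at hF ⊢
      obtain ⟨Gs, hGs, heq⟩ := hF
      refine ⟨fun j => c • Gs j, fun j => ih _ (by omega) _ (hGs j) c, ?_⟩
      intro μ hμ
      rw [map_smul, heq μ hμ, smul_add, smul_comm c, smul_comm c, Finset.smul_sum]
      congr 2
      exact Finset.sum_congr rfl fun j _ => (smul_comm c _ _)

/-- If `(G₀)_λ = λ^k Σ_{j=0}^{l} (log λ)^j G_j` for all `λ > 0`, then for all `0 ≤ i ≤ l`
and `μ > 0`, `(G_i)_μ = μ^k Σ_{j=i}^{l} C(j,i) (log μ)^{j-i} G_j`; in particular each `G_i`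
has almost homogeneous degree `k` and order `l - i`, and `G₀` has almost homogeneous
degree `k` and order `l` in the recursive sense. -/
theorem almostHom_coefficients_transform {W : Type*} [AddCommGroup W] [Module ℝ W]
    (act : ℝ → W →ₗ[ℝ] W)
    (hone : act 1 = LinearMap.id)
    (hmul : ∀ lam mu : ℝ, 0 < lam → 0 < mu → act (lam * mu) = (act lam).comp (act mu))
    (k : ℝ) (l : ℕ) (G : ℕ → W)
    (hexp : ∀ lam : ℝ, 0 < lam →
      act lam (G 0) = lam ^ k • ∑ j ∈ Finset.range (l + 1), (Real.log lam ^ j) • G j) :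
    (∀ i ≤ l, ∀ mu : ℝ, 0 < mu →
      act mu (G i) = mu ^ k • ∑ j ∈ Finset.Icc i l,
        ((j.choose i : ℝ) * Real.log mu ^ (j - i)) • G j) ∧
    (∀ i ≤ l, AlmostHom act k (l - i) (G i)) := by
  have key : ∀ mu : ℝ, 0 < mu → ∀ i ≤ l,
      act mu (G i) = mu ^ k • ∑ j ∈ Finset.Icc i l,
        ((j.choose i : ℝ) * Real.log mu ^ (j - i)) • G j := by
    intro mu hmu
    set s := Real.log mu with hs
    have main : ∀ t : ℝ, ∑ i ∈ Finset.range (l + 1), t ^ i •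
        (act mu (G i) - mu ^ k • ∑ j ∈ Finset.Icc i l,
          ((j.choose i : ℝ) * s ^ (j - i)) • G j) = 0 := by
      intro t
      set lam := Real.exp t with hlam0
      have hlam : (0 : ℝ) < lam := Real.exp_pos t
      have hlog : Real.log lam = t := Real.log_exp t
      have h1 := hexp lam hlam
      rw [hlog] at h1
      have h2 := hexp (mu * lam) (mul_pos hmu hlam)
      rw [Real.log_mul (ne_of_gt hmu) (ne_of_gt hlam), hlog, ← hs] at h2
      have h3 : act (mu * lam) (G 0) = act mu (act lam (G 0)) := by
        rw [hmul mu lam hmu hlam]; rfl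
      have e1 : act mu (act lam (G 0))
          = lam ^ k • ∑ j ∈ Finset.range (l + 1), t ^ j • act mu (G j) := by
        rw [h1, map_smul, map_sum]
        simp only [map_smul]
      have e2 : act mu (act lam (G 0))
          = lam ^ k • (mu ^ k • ∑ j ∈ Finset.range (l + 1), (s + t) ^ j • G j) := by
        rw [← h3, h2, Real.mul_rpow hmu.le hlam.le, mul_comm, mul_smul]
      have e : ∑ j ∈ Finset.range (l + 1), t ^ j • act mu (G j)
          = mu ^ k • ∑ j ∈ Finset.range (l + 1), (s + t) ^ j • G j :=
        smul_right_injective W (ne_of_gt (Real.rpow_pos_of_pos hlam k)) (e1.symm.trans e2)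
      have expand : mu ^ k • ∑ j ∈ Finset.range (l + 1), (s + t) ^ j • G j
          = ∑ i ∈ Finset.range (l + 1), t ^ i •
              (mu ^ k • ∑ j ∈ Finset.Icc i l, ((j.choose i : ℝ) * s ^ (j - i)) • G j) := by
        have step1 : ∑ j ∈ Finset.range (l + 1), (s + t) ^ j • G j
            = ∑ j ∈ Finset.range (l + 1), ∑ i ∈ Finset.range (j + 1),
                (t ^ i * s ^ (j - i) * (j.choose i : ℝ)) • G j := by
          refine Finset.sum_congr rfl fun j _ => ?_
          rw [add_comm s t, add_pow, Finset.sum_smul]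
        have step2 : ∑ j ∈ Finset.range (l + 1), ∑ i ∈ Finset.range (j + 1),
                (t ^ i * s ^ (j - i) * (j.choose i : ℝ)) • G j
            = ∑ i ∈ Finset.range (l + 1), ∑ j ∈ Finset.Icc i l,
                (t ^ i * s ^ (j - i) * (j.choose i : ℝ)) • G j := by
          have hmem : ∀ x y, x ∈ Finset.range (l + 1) ∧ y ∈ Finset.range (x + 1) ↔
              x ∈ Finset.Icc y l ∧ y ∈ Finset.range (l + 1) := by
            intro x y
            simp only [Finset.mem_range, Finset.mem_Icc]
            omega
          exact Finset.sum_comm'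
            (f := fun j i => (t ^ i * s ^ (j - i) * (j.choose i : ℝ)) • G j) hmem
        rw [step1, step2, Finset.smul_sum]
        refine Finset.sum_congr rfl fun i _ => ?_
        rw [smul_comm (t ^ i) (mu ^ k)]
        congr 1
        rw [Finset.smul_sum]
        refine Finset.sum_congr rfl fun j _ => ?_
        rw [smul_smul]
        congr 1
        ring
      simp only [smul_sub, Finset.sum_sub_distrib, sub_eq_zero]
      rw [e, expand]
    intro i hi
    have := vanish_of_forall_eval_zero (l + 1)
      (fun i => act mu (G i) - mu ^ k • ∑ j ∈ Finset.Icc i l,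
        ((j.choose i : ℝ) * s ^ (j - i)) • G j) main i (by omega)
    exact sub_eq_zero.mp this
  refine ⟨fun i hi mu hmu => key mu hmu i hi, ?_⟩
  have part2 : ∀ n, ∀ i ≤ l, l - i = n → AlmostHom act k n (G i) := by
    intro n
    induction n using Nat.strong_induction_on with
    | _ n ih =>
      intro i hil hn
      cases n with
      | zero =>
        have hil' : i = l := by omega
        simp only [AlmostHom]
        intro mu hmu
        have h := key mu hmu i hil
        rw [h, hil', Finset.Icc_self]
        simp
      | succ m =>
        simp only [AlmostHom]
        refine ⟨fun j => ((i + 1 + (j : ℕ)).choose i : ℝ) • G (i + 1 + (j : ℕ)), ?_, ?_⟩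
        · intro j
          apply almostHom_smul
          exact ih (m - (j : ℕ)) (by omega) (i + 1 + (j : ℕ)) (by omega) (by omega)
        · intro mu hmu
          rw [key mu hmu i hil]
          have hsplit : Finset.Icc i l = insert i (Finset.Icc (i + 1) l) := by
            ext x
            simp only [Finset.mem_Icc, Finset.mem_insert]
            omega
          rw [hsplit, Finset.sum_insert (by simp only [Finset.mem_Icc]; omega), smul_add]
          congr 1
          · simp
          · rw [sum_Icc_shift]
            have hcard : l + 1 - (i + 1) = m + 1 := by omega
            rw [hcard, ← Fin.sum_univ_eq_sum_range
              (fun j => (((i + 1 + j).choose i : ℝ) * Real.log mu ^ (i + 1 + j - i)) • G (i + 1 + j))]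
            congr 1
            refine Finset.sum_congr rfl fun j _ => ?_
            have h1 : i + 1 + (j : ℕ) - i = (j : ℕ) + 1 := by omega
            rw [h1, mul_comm, mul_smul]
  exact fun i hi => part2 (l - i) i hi rfl
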